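/- Under the multilevel construction above, if additionally E‖g_j - v‖² ≤ A/2^j + C/4^j for all levels j and some target vector v and constants A, C ≥ 0, then E‖g - v‖² ≤ 2E‖g₀ - v‖² + 8 ∑_{i=1}^{⌊log₂ M⌋} 2^i (A/2^{i-1} + C/4^{i-1}), which is bounded by O(A log₂ M + C). -/

import Mathlib

open MeasureTheory

/-- Multilevel Monte Carlo second-moment bound: if `E‖g_j - v‖² ≤ A/2ʲ + C/4ʲ` for every
level `j`, then the randomized estimator `g = g₀ + 1{2^J ≤ M} 2^J (g_J - g_{J-1})`,
`J ~ Geom(1/2)`, satisfies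
`E‖g - v‖² ≤ 2 E‖g₀ - v‖² + 8 ∑_{i=1}^{⌊log₂ M⌋} 2ⁱ (A/2^{i-1} + C/4^{i-1})`. -/
theorem multilevel_variance_bound (d : ℕ) {Ω : Type*} [MeasurableSpace Ω]
    (μ : Measure Ω) [IsProbabilityMeasure μ]
    (p : ℕ → ℝ) (hp : ∀ i, 1 ≤ i → p i = (1 / 2 : ℝ) ^ i) (hp0 : p 0 = 0)
    (M : ℕ) (hM : 2 ≤ M)
    (g : ℕ → Ω → EuclideanSpace ℝ (Fin d)) (hint : ∀ j, Integrable (g j) μ)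
    (v : EuclideanSpace ℝ (Fin d)) (A C : ℝ) (hA : 0 ≤ A) (hC : 0 ≤ C)
    (hint2 : ∀ j, Integrable (fun ω => ‖g j ω - v‖ ^ 2) μ)
    (hvar : ∀ j, ∫ ω, ‖g j ω - v‖ ^ 2 ∂μ ≤ A / 2 ^ j + C / 4 ^ j)
    (G : ℕ → Ω → EuclideanSpace ℝ (Fin d))
    (hG : ∀ i ω, G i ω =
      g 0 ω + (if 2 ^ i ≤ M then ((2 : ℝ) ^ i) • (g i ω - g (i - 1) ω) else 0)) :
    ∑' i : ℕ, p i * (∫ ω, ‖G i ω - v‖ ^ 2 ∂μ) ≤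
      2 * ∫ ω, ‖g 0 ω - v‖ ^ 2 ∂μ +
        8 * ∑ i ∈ Finset.Icc 1 (Nat.log 2 M),
          (2 : ℝ) ^ i * (A / 2 ^ (i - 1) + C / 4 ^ (i - 1)) := by
  classical
  set E : ℕ → ℝ := fun j => ∫ ω, ‖g j ω - v‖ ^ 2 ∂μ with hE
  have hEnn : ∀ j, 0 ≤ E j := fun j => integral_nonneg fun ω => sq_nonneg _
  set L := Nat.log 2 M with hL
  set b : ℕ → ℝ := fun i =>
    if 1 ≤ i ∧ 2 ^ i ≤ M then 8 * 4 ^ i * (A / 2 ^ (i - 1) + C / 4 ^ (i - 1)) else 0 with hb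
  have hbnn : ∀ i, 0 ≤ b i := by
    intro i
    simp only [hb]
    split <;> positivity
  -- key per-level bound
  have key : ∀ i, 1 ≤ i → (∫ ω, ‖G i ω - v‖ ^ 2 ∂μ) ≤ 2 * E 0 + b i := by
    intro i hi
    by_cases hiM : 2 ^ i ≤ M
    · have hbi : b i = 8 * 4 ^ i * (A / 2 ^ (i - 1) + C / 4 ^ (i - 1)) := by
        simp [hb, hi, hiM]
      have h4 : (4 : ℝ) ^ i = 2 ^ i * 2 ^ i := by
        rw [← mul_pow]; norm_num
      have hpow : (0 : ℝ) < 2 ^ i := by positivity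
      have step1 : (∫ ω, ‖G i ω - v‖ ^ 2 ∂μ) ≤
          ∫ ω, (2 * ‖g 0 ω - v‖ ^ 2 +
            4 * 4 ^ i * (‖g i ω - v‖ ^ 2 + ‖g (i - 1) ω - v‖ ^ 2)) ∂μ := by
        apply integral_mono_of_nonneg
        · exact Filter.Eventually.of_forall fun ω => sq_nonneg _
        · exact ((hint2 0).const_mul 2).add
            (((hint2 i).add (hint2 (i - 1))).const_mul (4 * 4 ^ i))
        · apply Filter.Eventually.of_forall
          intro ω
          show ‖G i ω - v‖ ^ 2 ≤
            2 * ‖g 0 ω - v‖ ^ 2 + 4 * 4 ^ i * (‖g i ω - v‖ ^ 2 + ‖g (i - 1) ω - v‖ ^ 2)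
          have h1 : G i ω - v =
              (g 0 ω - v) + ((2 : ℝ) ^ i) • ((g i ω - v) - (g (i - 1) ω - v)) := by
            rw [hG i ω, if_pos hiM]
            module
          have h2 : ‖G i ω - v‖ ≤
              ‖g 0 ω - v‖ + 2 ^ i * (‖g i ω - v‖ + ‖g (i - 1) ω - v‖) := by
            rw [h1]
            refine (norm_add_le _ _).trans ?_
            have : ‖((2 : ℝ) ^ i) • ((g i ω - v) - (g (i - 1) ω - v))‖
                = 2 ^ i * ‖(g i ω - v) - (g (i - 1) ω - v)‖ := by
              rw [norm_smul, Real.norm_of_nonneg (by positivity)]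
            rw [this]
            have := norm_sub_le (g i ω - v) (g (i - 1) ω - v)
            nlinarith [hpow]
          have ha := norm_nonneg (G i ω - v)
          have hsq : ‖G i ω - v‖ ^ 2 ≤
              (‖g 0 ω - v‖ + 2 ^ i * (‖g i ω - v‖ + ‖g (i - 1) ω - v‖)) ^ 2 :=
            pow_le_pow_left₀ ha h2 2
          nlinarith [hsq, sq_nonneg (‖g 0 ω - v‖ - 2 ^ i * (‖g i ω - v‖ + ‖g (i - 1) ω - v‖)),
            sq_nonneg (‖g i ω - v‖ - ‖g (i - 1) ω - v‖), h4,
            mul_nonneg (mul_nonneg hpow.le hpow.le)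
              (sq_nonneg (‖g i ω - v‖ - ‖g (i - 1) ω - v‖))]
      have step2 : (∫ ω, (2 * ‖g 0 ω - v‖ ^ 2 +
            4 * 4 ^ i * (‖g i ω - v‖ ^ 2 + ‖g (i - 1) ω - v‖ ^ 2)) ∂μ)
          = 2 * E 0 + 4 * 4 ^ i * (E i + E (i - 1)) := by
        have hIi : Integrable (fun ω => ‖g i ω - v‖ ^ 2 + ‖g (i - 1) ω - v‖ ^ 2) μ :=
          (hint2 i).add (hint2 (i - 1))
        rw [integral_add ((hint2 0).const_mul 2) (hIi.const_mul (4 * 4 ^ i)),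
          integral_const_mul, integral_const_mul,
          integral_add (hint2 i) (hint2 (i - 1))]
      have hEi : E i ≤ A / 2 ^ (i - 1) + C / 4 ^ (i - 1) := by
        refine (hvar i).trans ?_
        have h2' : (2 : ℝ) ^ (i - 1) ≤ 2 ^ i := by
          apply pow_le_pow_right₀ (by norm_num) (Nat.sub_le i 1)
        have h4' : (4 : ℝ) ^ (i - 1) ≤ 4 ^ i := by
          apply pow_le_pow_right₀ (by norm_num) (Nat.sub_le i 1)
        gcongr
      have hEim : E (i - 1) ≤ A / 2 ^ (i - 1) + C / 4 ^ (i - 1) := hvar (i - 1)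
      have h4nn : (0 : ℝ) ≤ 4 ^ i := by positivity
      rw [hbi]
      nlinarith [step1, step2, hEi, hEim]
    · have hbi : b i = 0 := by simp [hb, hiM]
      have hGi : (∫ ω, ‖G i ω - v‖ ^ 2 ∂μ) = E 0 := by
        have : (fun ω => ‖G i ω - v‖ ^ 2) = fun ω => ‖g 0 ω - v‖ ^ 2 := by
          funext ω
          rw [hG i ω, if_neg hiM, add_zero]
        rw [hE, this]
      rw [hGi, hbi]
      linarith [hEnn 0]
  -- properties of p
  have hpnn : ∀ i, 0 ≤ p i := by
    intro i
    rcases Nat.eq_zero_or_pos i with h | h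
    · simp [h, hp0]
    · rw [hp i h]; positivity
  have hple : ∀ i, p i ≤ (1 / 2 : ℝ) ^ i := by
    intro i
    rcases Nat.eq_zero_or_pos i with h | h
    · simp [h, hp0]
    · rw [hp i h]
  have hpsum : Summable p :=
    Summable.of_nonneg_of_le hpnn hple summable_geometric_two
  have htsum_p : ∑' i, p i = 1 := by
    rw [hpsum.tsum_eq_zero_add, hp0, zero_add]
    have hcongr : ∀ n : ℕ, p (n + 1) = (1 / 2 : ℝ) * (1 / 2) ^ n := by
      intro n
      rw [hp (n + 1) (Nat.succ_le_succ (Nat.zero_le n)), pow_succ]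
      ring
    rw [tsum_congr hcongr, tsum_mul_left, tsum_geometric_two]
    norm_num
  -- the b part is finitely supported
  have hbz : ∀ i ∉ Finset.Icc 1 L, p i * b i = 0 := by
    intro i hi
    simp only [Finset.mem_Icc, not_and_or, not_le] at hi
    rcases hi with h | h
    · interval_cases i
      simp [hp0]
    · have : ¬ 2 ^ i ≤ M := by
        rw [← Nat.le_log_iff_pow_le (by norm_num) (by omega)]
        omega
      simp [hb, this]
  have hqsum : Summable fun i => p i * b i :=
    summable_of_ne_finset_zero hbz
  have hq : ∑' i, p i * b i =
      8 * ∑ i ∈ Finset.Icc 1 L, (2 : ℝ) ^ i * (A / 2 ^ (i - 1) + C / 4 ^ (i - 1)) := by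
    rw [tsum_eq_sum hbz, Finset.mul_sum]
    apply Finset.sum_congr rfl
    intro i hi
    simp only [Finset.mem_Icc] at hi
    have h2M : 2 ^ i ≤ M := by
      rw [← Nat.le_log_iff_pow_le (by norm_num) (by omega)]
      exact hi.2
    have hbi : b i = 8 * 4 ^ i * (A / 2 ^ (i - 1) + C / 4 ^ (i - 1)) := by
      simp [hb, hi.1, h2M]
    have hpi : p i = (1 / 2 : ℝ) ^ i := hp i hi.1
    have hmix : (1 / 2 : ℝ) ^ i * 4 ^ i = 2 ^ i := by
      rw [← mul_pow]; norm_num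
    rw [hbi, hpi]
    calc (1 / 2 : ℝ) ^ i * (8 * 4 ^ i * (A / 2 ^ (i - 1) + C / 4 ^ (i - 1)))
        = 8 * ((1 / 2 : ℝ) ^ i * 4 ^ i) * (A / 2 ^ (i - 1) + C / 4 ^ (i - 1)) := by ring
      _ = 8 * ((2 : ℝ) ^ i * (A / 2 ^ (i - 1) + C / 4 ^ (i - 1))) := by rw [hmix]; ring
  -- summability of the dominating sequence
  have hhsum : Summable fun i => p i * (2 * E 0 + b i) := by
    have : (fun i => p i * (2 * E 0 + b i))
        = fun i => p i * (2 * E 0) + p i * b i := by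
      funext i; ring
    rw [this]
    exact (hpsum.mul_right _).add hqsum
  have hfh : ∀ i, p i * (∫ ω, ‖G i ω - v‖ ^ 2 ∂μ) ≤ p i * (2 * E 0 + b i) := by
    intro i
    rcases Nat.eq_zero_or_pos i with h | h
    · simp [h, hp0]
    · exact mul_le_mul_of_nonneg_left (key i h) (hpnn i)
  have hfsum : Summable fun i => p i * (∫ ω, ‖G i ω - v‖ ^ 2 ∂μ) := by
    apply Summable.of_nonneg_of_le (fun i => ?_) hfh hhsum
    exact mul_nonneg (hpnn i) (integral_nonneg fun ω => sq_nonneg _)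
  calc ∑' i : ℕ, p i * (∫ ω, ‖G i ω - v‖ ^ 2 ∂μ)
      ≤ ∑' i, p i * (2 * E 0 + b i) := hfsum.tsum_le_tsum hfh hhsum
    _ = (∑' i, p i * (2 * E 0)) + ∑' i, p i * b i := by
        rw [← (hpsum.mul_right _).tsum_add hqsum]
        apply tsum_congr
        intro i; ring
    _ = 2 * E 0 + 8 * ∑ i ∈ Finset.Icc 1 L,
          (2 : ℝ) ^ i * (A / 2 ^ (i - 1) + C / 4 ^ (i - 1)) := by
        rw [tsum_mul_right, htsum_p, one_mul, hq]
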